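/- Let φ ∈ Φ, let N = 1, let f : (0,∞) → ℝ be defined by f(x) = 0 for 0 < x < 1 and f(x) = 1 for x ≥ 1, let G_w(t) := (w/√π) e^{−w² (log t)²}, and let (T_w f)(s) := ∫_0^∞ G_w(t) f(st) t^{−1} dt. Then for every μ > 0 and every w > 0, V^φ[μ(T_w f − f)] ≥ φ(μ/2) > 0; in particular, V^φ[μ(T_w f − f)] does not tend to 0 as w → +∞ for any μ > 0, even though f ∈ BV^φ((0,∞)). Hence the conclusion of the convergence theorem fails for functions of bounded φ-variation that are not φ-absolutely continuous. -/

import Mathlib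

open MeasureTheory Filter Set
open scoped ENNReal

noncomputable section

/-- The one-dimensional Mellin operator `(T f)(s) := ∫₀^∞ K(t) f(st) t⁻¹ dt`. -/
def mellinOp1 (K : ℝ → ℝ) (f : ℝ → ℝ) (s : ℝ) : ℝ :=
  ∫ t in Set.Ioi (0 : ℝ), K t * f (s * t) * t⁻¹

/-- The Mellin Gauss–Weierstrass kernel `G_w(t) = (w/√π) e^{−w² log² t}`. -/
def gaussKernel (w t : ℝ) : ℝ :=
  (w / Real.sqrt Real.pi) * Real.exp (-(w ^ 2) * Real.log t ^ 2)

/-- The class `Φ`: `φ : [0,∞) → [0,∞)` convex, vanishing exactly at `0`,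
with `φ(u)/u → 0` as `u → 0⁺`. -/
def IsPhiFun (φ : ℝ → ℝ) : Prop :=
  ConvexOn ℝ (Set.Ici 0) φ ∧ (∀ u, 0 ≤ u → 0 ≤ φ u) ∧
  (∀ u, 0 ≤ u → (φ u = 0 ↔ u = 0)) ∧
  Tendsto (fun u => φ u / u) (nhdsWithin 0 (Set.Ioi 0)) (nhds 0)

/-- The (Musielak–Orlicz) `φ`-variation of `g` on `[a,b]`. -/
def phiVar1 (φ : ℝ → ℝ) (a b : ℝ) (g : ℝ → ℝ) : ℝ≥0∞ :=
  ⨆ (n : ℕ) (u : Fin (n + 1) → ℝ) (_ : Monotone u) (_ : u 0 = a) (_ : u (Fin.last n) = b),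
    ∑ i : Fin n, ENNReal.ofReal (φ |g (u i.succ) - g (u i.castSucc)|)

/-- `V^φ[g]`, the `φ`-variation of `g` over the whole `(0,∞)`:
the sup of `V^φ_{[a,b]}[g]` over all `[a,b] ⊂ (0,∞)`. -/
def totalVar1 (φ : ℝ → ℝ) (g : ℝ → ℝ) : ℝ≥0∞ :=
  ⨆ (a : ℝ) (b : ℝ) (_ : 0 < a) (_ : a ≤ b), phiVar1 φ a b g

/-- Convexity estimate: for `0 ≤ d ≤ c`, `φ d ≤ (d/c) φ c`. -/
lemma phi_convex_est {φ : ℝ → ℝ} (hφ : IsPhiFun φ) {d c : ℝ}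
    (hd : 0 ≤ d) (hdc : d ≤ c) (hc : 0 < c) : φ d ≤ (d / c) * φ c := by
  have hφ0 : φ 0 = 0 := (hφ.2.2.1 0 le_rfl).mpr rfl
  have hb : 0 ≤ d / c := div_nonneg hd hc.le
  have hb1 : d / c ≤ 1 := (div_le_one hc).mpr hdc
  have H := hφ.1.2 (Set.mem_Ici.mpr (le_refl (0:ℝ))) (Set.mem_Ici.mpr hc.le)
    (show (0:ℝ) ≤ 1 - d / c by linarith) hb (by ring)
  simp only [smul_eq_mul, mul_zero, zero_add, hφ0] at H
  rw [div_mul_cancel₀ d hc.ne'] at H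
  linarith [H]

/-- Monotonicity of `φ` on `[0,∞)`. -/
lemma phi_mono {φ : ℝ → ℝ} (hφ : IsPhiFun φ) {d c : ℝ}
    (hd : 0 ≤ d) (hdc : d ≤ c) : φ d ≤ φ c := by
  rcases eq_or_lt_of_le (hd.trans hdc) with hc | hc
  · have h0 : d = 0 := le_antisymm (hdc.trans hc.symm.le) hd
    rw [h0, ← hc]
  · calc φ d ≤ (d / c) * φ c := phi_convex_est hφ hd hdc hc
    _ ≤ 1 * φ c := by
        apply mul_le_mul_of_nonneg_right ((div_le_one hc).mpr hdc)
          (hφ.2.1 c (hd.trans hdc))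
    _ = φ c := one_mul _

lemma gaussKernel_nonneg {w : ℝ} (hw : 0 < w) (t : ℝ) : 0 ≤ gaussKernel w t := by
  unfold gaussKernel
  positivity

lemma mellin_at_one {f : ℝ → ℝ} (hf0 : ∀ x, 0 < x → x < 1 → f x = 0)
    (hf1 : ∀ x, 1 ≤ x → f x = 1) {w : ℝ} (hw : 0 < w) :
    mellinOp1 (gaussKernel w) f 1 = 1 / 2 := by
  have step1 : mellinOp1 (gaussKernel w) f 1 =
      ∫ t in Set.Ioi (0:ℝ), (Set.Ici (1:ℝ)).indicator (fun t => gaussKernel w t * t⁻¹) t := by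
    unfold mellinOp1
    apply setIntegral_congr_fun measurableSet_Ioi
    intro t ht
    simp only [mem_Ioi] at ht
    by_cases h1 : 1 ≤ t
    · simp only [Set.indicator_of_mem (Set.mem_Ici.mpr h1)]
      rw [one_mul, hf1 t h1, mul_one]
    · simp only [Set.indicator_of_notMem (fun h => h1 (Set.mem_Ici.mp h))]
      rw [one_mul, hf0 t ht (lt_of_not_ge h1), mul_zero, zero_mul]
  rw [step1, MeasureTheory.setIntegral_indicator measurableSet_Ici]
  have hsub : Set.Ioi (0:ℝ) ∩ Set.Ici 1 = Set.Ici (1:ℝ) := by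
    apply Set.inter_eq_right.mpr
    intro x hx
    simp only [mem_Ici] at hx
    exact lt_of_lt_of_le one_pos hx
  rw [hsub]
  have himg : Real.exp '' Set.Ici (0:ℝ) = Set.Ici (1:ℝ) := by
    ext y
    constructor
    · rintro ⟨x, hx, rfl⟩
      simpa using Real.one_le_exp_iff.mpr hx
    · intro hy
      simp only [mem_Ici] at hy
      exact ⟨Real.log y, Real.log_nonneg hy, Real.exp_log (by linarith)⟩
  rw [← himg, integral_image_eq_integral_abs_deriv_smul measurableSet_Ici
      (fun x _ => (Real.hasDerivAt_exp x).hasDerivWithinAt) Real.exp_injective.injOn]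
  have key : ∀ x : ℝ, |Real.exp x| • (gaussKernel w (Real.exp x) * (Real.exp x)⁻¹) =
      (w / Real.sqrt Real.pi) * Real.exp (-(w ^ 2) * x ^ 2) := by
    intro x
    rw [abs_of_pos (Real.exp_pos x), gaussKernel, Real.log_exp, smul_eq_mul]
    field_simp
  simp_rw [key]
  rw [MeasureTheory.integral_Ici_eq_integral_Ioi, MeasureTheory.integral_const_mul,
    integral_gaussian_Ioi]
  have h1 : Real.sqrt (Real.pi / w ^ 2) = Real.sqrt Real.pi / w := by
    rw [Real.sqrt_div Real.pi_pos.le, Real.sqrt_sq hw.le]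
  rw [h1]
  have h2 : Real.sqrt Real.pi > 0 := Real.sqrt_pos.mpr Real.pi_pos
  field_simp

lemma mellin_nonneg {f : ℝ → ℝ} (hf0 : ∀ x, 0 < x → x < 1 → f x = 0)
    (hf1 : ∀ x, 1 ≤ x → f x = 1) {w s : ℝ} (hw : 0 < w) (hs : 0 < s) :
    0 ≤ mellinOp1 (gaussKernel w) f s := by
  apply setIntegral_nonneg measurableSet_Ioi
  intro t ht
  simp only [mem_Ioi] at ht
  have hst : 0 < s * t := mul_pos hs ht
  have hfst : 0 ≤ f (s * t) := by
    by_cases h1 : 1 ≤ s * t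
    · rw [hf1 _ h1]; norm_num
    · rw [hf0 _ hst (lt_of_not_ge h1)]
  exact mul_nonneg (mul_nonneg (gaussKernel_nonneg hw t) hfst) (inv_nonneg.mpr ht.le)

theorem statement12 (φ : ℝ → ℝ) (hφ : IsPhiFun φ)
    (f : ℝ → ℝ) (hf0 : ∀ x, 0 < x → x < 1 → f x = 0)
    (hf1 : ∀ x, 1 ≤ x → f x = 1) :
    (∀ μ > (0 : ℝ), ∀ w > (0 : ℝ),
      ENNReal.ofReal (φ (μ / 2)) ≤
        totalVar1 φ (fun s => μ * (mellinOp1 (gaussKernel w) f s - f s)) ∧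
      0 < φ (μ / 2)) ∧
    (∀ μ > (0 : ℝ),
      ¬ Tendsto (fun w => totalVar1 φ (fun s => μ * (mellinOp1 (gaussKernel w) f s - f s)))
          atTop (nhds 0)) ∧
    (∃ l > (0 : ℝ), totalVar1 φ (fun x => l * f x) < ⊤) := by
  have hφpos : ∀ μ : ℝ, 0 < μ → 0 < φ (μ / 2) := by
    intro μ hμ
    rcases lt_or_eq_of_le (hφ.2.1 (μ/2) (by linarith)) with h | h
    · exact h
    · exfalso
      have := (hφ.2.2.1 (μ/2) (by linarith)).mp h.symm
      linarith
  have main : ∀ μ > (0 : ℝ), ∀ w > (0 : ℝ),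
      ENNReal.ofReal (φ (μ / 2)) ≤
        totalVar1 φ (fun s => μ * (mellinOp1 (gaussKernel w) f s - f s)) := by
    intro μ hμ w hw
    set g : ℝ → ℝ := fun s => μ * (mellinOp1 (gaussKernel w) f s - f s) with hg
    have hg1 : g 1 = -(μ / 2) := by
      simp only [hg, mellin_at_one hf0 hf1 hw, hf1 1 le_rfl]
      ring
    have hghalf : 0 ≤ g (1/2) := by
      have : f (1/2 : ℝ) = 0 := hf0 _ (by norm_num) (by norm_num)
      simp only [hg, this, sub_zero]
      exact mul_nonneg hμ.le (mellin_nonneg hf0 hf1 hw (by norm_num))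
    set u : Fin 2 → ℝ := ![1/2, 1] with hu
    have hmono : Monotone u := by
      intro i j hij
      fin_cases i <;> fin_cases j <;> simp_all [hu] <;> norm_num
    have hkey : ENNReal.ofReal (φ (μ / 2)) ≤
        ∑ i : Fin 1, ENNReal.ofReal (φ |g (u i.succ) - g (u i.castSucc)|) := by
      rw [Fin.sum_univ_one]
      apply ENNReal.ofReal_le_ofReal
      apply phi_mono hφ (by linarith)
      have hu0 : u (0 : Fin 1).castSucc = 1/2 := rfl
      have hu1 : u (0 : Fin 1).succ = 1 := rfl
      rw [hu0, hu1, hg1]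
      rw [abs_of_nonpos (by linarith)]
      linarith
    refine hkey.trans ?_
    have h1 : (∑ i : Fin 1, ENNReal.ofReal (φ |g (u i.succ) - g (u i.castSucc)|)) ≤
        phiVar1 φ (1/2) 1 g := by
      apply le_iSup_of_le 1
      apply le_iSup_of_le u
      apply le_iSup_of_le hmono
      refine le_iSup_of_le (by rfl) (le_iSup_of_le (by rfl) le_rfl)
    refine h1.trans ?_
    apply le_iSup_of_le (1/2 : ℝ)
    apply le_iSup_of_le (1 : ℝ)
    refine le_iSup_of_le (by norm_num) (le_iSup_of_le (by norm_num) le_rfl)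
  refine ⟨fun μ hμ w hw => ⟨main μ hμ w hw, hφpos μ hμ⟩, ?_, ?_⟩
  · intro μ hμ h
    have hc : (0:ℝ≥0∞) < ENNReal.ofReal (φ (μ / 2)) := by
      rw [ENNReal.ofReal_pos]; exact hφpos μ hμ
    have hev : ∀ᶠ w in atTop,
        totalVar1 φ (fun s => μ * (mellinOp1 (gaussKernel w) f s - f s)) <
          ENNReal.ofReal (φ (μ / 2)) := h.eventually_lt_const hc
    obtain ⟨w, hlt, hw⟩ := (hev.and (eventually_gt_atTop (0:ℝ))).exists
    exact absurd (main μ hμ w hw) (not_le.mpr hlt)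
  · refine ⟨1, one_pos, ?_⟩
    have hbound : totalVar1 φ (fun x => 1 * f x) ≤ ENNReal.ofReal (φ 1) := by
      apply iSup_le; intro a
      apply iSup_le; intro b
      apply iSup_le; intro ha
      apply iSup_le; intro hab
      apply iSup_le; intro n
      apply iSup_le; intro u
      apply iSup_le; intro humono
      apply iSup_le; intro hu0
      apply iSup_le; intro hulast
      -- values of f at partition points
      have hupos : ∀ j : Fin (n+1), 0 < u j := fun j =>
        lt_of_lt_of_le ha (hu0 ▸ humono (Fin.zero_le j))
      have hf01 : ∀ j : Fin (n+1), f (u j) = 0 ∨ f (u j) = 1 := by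
        intro j
        by_cases h1 : 1 ≤ u j
        · exact Or.inr (hf1 _ h1)
        · exact Or.inl (hf0 _ (hupos j) (lt_of_not_ge h1))
      have hfmono : ∀ i j : Fin (n+1), i ≤ j → f (u i) ≤ f (u j) := by
        intro i j hij
        by_cases h1 : 1 ≤ u i
        · rw [hf1 _ h1, hf1 _ (le_trans h1 (humono hij))]
        · rw [hf0 _ (hupos i) (lt_of_not_ge h1)]
          rcases hf01 j with h | h <;> rw [h] <;> norm_num
      set d : Fin n → ℝ := fun i => f (u i.succ) - f (u i.castSucc) with hd
      have hdnn : ∀ i, 0 ≤ d i := fun i =>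
        sub_nonneg.mpr (hfmono _ _ (Fin.castSucc_le_succ i))
      have hd1 : ∀ i, d i ≤ 1 := by
        intro i
        rcases hf01 i.succ with h | h <;> rcases hf01 i.castSucc with h' | h' <;>
          simp [hd, h, h']
      -- termwise bound
      have hterm : ∀ i : Fin n,
          ENNReal.ofReal (φ |(fun x => 1 * f x) (u i.succ) - (fun x => 1 * f x) (u i.castSucc)|)
            ≤ ENNReal.ofReal (d i * φ 1) := by
        intro i
        apply ENNReal.ofReal_le_ofReal
        simp only [one_mul]
        rw [abs_of_nonneg (hdnn i)]
        calc φ (d i) ≤ (d i / 1) * φ 1 := phi_convex_est hφ (hdnn i) (hd1 i) one_pos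
        _ = d i * φ 1 := by rw [div_one]
      calc (∑ i : Fin n, ENNReal.ofReal
              (φ |(fun x => 1 * f x) (u i.succ) - (fun x => 1 * f x) (u i.castSucc)|))
          ≤ ∑ i : Fin n, ENNReal.ofReal (d i * φ 1) := Finset.sum_le_sum fun i _ => hterm i
        _ = ENNReal.ofReal (∑ i : Fin n, d i * φ 1) := by
            rw [ENNReal.ofReal_sum_of_nonneg]
            intro i _
            exact mul_nonneg (hdnn i) (hφ.2.1 1 one_pos.le)
        _ ≤ ENNReal.ofReal (φ 1) := by
            apply ENNReal.ofReal_le_ofReal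
            rw [← Finset.sum_mul]
            set H : ℕ → ℝ :=
              fun k => f (u ⟨min k n, Nat.lt_succ_of_le (min_le_right k n)⟩) with hH
            have hstep : ∀ i : Fin n, d i = H (↑i + 1) - H ↑i := by
              intro i
              have h1 : u ⟨min (↑i+1) n, Nat.lt_succ_of_le (min_le_right _ n)⟩ = u i.succ := by
                congr 1
                exact Fin.ext (by simp [Nat.min_eq_left (Nat.succ_le_of_lt i.isLt)])
              have h2 : u ⟨min ↑i n, Nat.lt_succ_of_le (min_le_right _ n)⟩ = u i.castSucc := by
                congr 1
                exact Fin.ext (by simp [Nat.min_eq_left (le_of_lt i.isLt)])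
              simp only [hd, hH]
              rw [h1, h2]
            have hsum : ∑ i : Fin n, d i = H n - H 0 := by
              calc ∑ i : Fin n, d i = ∑ i : Fin n, (H (↑i + 1) - H ↑i) :=
                    Finset.sum_congr rfl (fun i _ => hstep i)
                _ = ∑ k ∈ Finset.range n, (H (k + 1) - H k) :=
                    Fin.sum_univ_eq_sum_range (fun k => H (k + 1) - H k) n
                _ = H n - H 0 := Finset.sum_range_sub H n
            have hHn : H n = f (u (Fin.last n)) := by
              simp only [hH]
              congr 1
              exact congrArg u (Fin.ext (by simp))
            have hH0 : H 0 = f (u 0) := by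
              simp only [hH]
              congr 1
            have hle1 : ∑ i : Fin n, d i ≤ 1 := by
              rw [hsum, hHn, hH0]
              rcases hf01 (Fin.last n) with h | h <;> rcases hf01 0 with h' | h' <;>
                rw [h, h'] <;> norm_num
            have hnn : 0 ≤ ∑ i : Fin n, d i := Finset.sum_nonneg fun i _ => hdnn i
            have hφ1 : 0 ≤ φ 1 := hφ.2.1 1 one_pos.le
            nlinarith [mul_le_mul_of_nonneg_right hle1 hφ1]
    exact lt_of_le_of_lt hbound ENNReal.ofReal_lt_top
end
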